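/- Let n ≥ 1 and let ψ : [0,1]^n → ℝ be monotonic, continuous, quasiconcave, homogeneous, and translation-invariant. Then there exists a nonempty closed convex set M ⊆ Δ_n such that for all u ∈ [0,1]^n, ψ(u) = min_{μ ∈ M} Σ_{i=1}^n μ_i u_i. -/

import Mathlib

open Finset

namespace S6

variable {n : ℕ}

/-- scaled/translated value used to extend ψ off the cube -/
noncomputable def val (ψ : (Fin n → ℝ) → ℝ) (x : Fin n → ℝ) (l c : ℝ) : ℝ :=
  l⁻¹ * ψ (l • (x + fun _ => c)) - c

def Adm (x : Fin n → ℝ) (l c : ℝ) : Prop :=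
  0 < l ∧ l • (x + fun _ => c) ∈ Set.Icc (0 : Fin n → ℝ) 1

noncomputable def cc (x : Fin n → ℝ) : ℝ := 1 + ∑ i, |x i|

noncomputable def Psi (ψ : (Fin n → ℝ) → ℝ) (x : Fin n → ℝ) : ℝ :=
  val ψ x (2 * cc x)⁻¹ (cc x)

lemma mem_cube_iff {u : Fin n → ℝ} :
    u ∈ Set.Icc (0 : Fin n → ℝ) 1 ↔ ∀ i, 0 ≤ u i ∧ u i ≤ 1 := by
  simp [Set.mem_Icc, Pi.le_def, forall_and]

lemma cc_ge_one (x : Fin n → ℝ) : 1 ≤ cc x := by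
  have : (0:ℝ) ≤ ∑ i, |x i| := Finset.sum_nonneg fun i _ => abs_nonneg _
  simp only [cc]; linarith

lemma abs_le_cc (x : Fin n → ℝ) (i : Fin n) : |x i| ≤ cc x - 1 := by
  have : |x i| ≤ ∑ j, |x j| :=
    Finset.single_le_sum (fun j _ => abs_nonneg (x j)) (Finset.mem_univ i)
  simp only [cc]; linarith

lemma adm_aux {x : Fin n → ℝ} {c : ℝ} (h : ∀ i, |x i| ≤ c - 1) (hc : 1 ≤ c) :
    Adm x (2 * c)⁻¹ c := by
  have hc0 : (0:ℝ) < 2 * c := by linarith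
  refine ⟨inv_pos.mpr hc0, mem_cube_iff.mpr fun i => ?_⟩
  have h1 := h i
  have h2 : -(c - 1) ≤ x i := neg_le_of_abs_le h1
  have h3 : x i ≤ c - 1 := le_of_abs_le h1
  have hxi : ((2 * c)⁻¹ • (x + fun _ => c) : Fin n → ℝ) i = (2 * c)⁻¹ * (x i + c) := rfl
  rw [hxi]
  constructor
  · have : (0:ℝ) ≤ x i + c := by linarith
    positivity
  · rw [inv_mul_le_iff₀ hc0]; linarith

lemma adm_canon (x : Fin n → ℝ) : Adm x (2 * cc x)⁻¹ (cc x) :=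
  adm_aux (abs_le_cc x) (cc_ge_one x)

lemma adm_pair (x y : Fin n → ℝ) : ∃ l c, Adm x l c ∧ Adm y l c := by
  refine ⟨(2 * (cc x + cc y))⁻¹, cc x + cc y, adm_aux (fun i => ?_) ?_,
    adm_aux (fun i => ?_) ?_⟩
  · have := abs_le_cc x i; have := cc_ge_one y; linarith
  · have := cc_ge_one x; have := cc_ge_one y; linarith
  · have := abs_le_cc y i; have := cc_ge_one x; linarith
  · have := cc_ge_one x; have := cc_ge_one y; linarith

lemma smul_mem_cube {u : Fin n → ℝ} (hu : u ∈ Set.Icc (0 : Fin n → ℝ) 1)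
    {α : ℝ} (h0 : 0 ≤ α) (h1 : α ≤ 1) : α • u ∈ Set.Icc (0 : Fin n → ℝ) 1 := by
  rw [mem_cube_iff] at hu ⊢
  intro i
  have := hu i
  constructor
  · have : (α • u) i = α * u i := rfl
    rw [this]; exact mul_nonneg h0 (hu i).1
  · have he : (α • u) i = α * u i := rfl
    rw [he]; nlinarith [(hu i).1, (hu i).2]

section
variable {ψ : (Fin n → ℝ) → ℝ}
variable (hhom : ∀ u : Fin n → ℝ, u ∈ Set.Icc (0 : Fin n → ℝ) 1 → ∀ α : ℝ, 0 < α →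
      α • u ∈ Set.Icc (0 : Fin n → ℝ) 1 → ψ (α • u) = α * ψ u)
variable (hti : ∀ u : Fin n → ℝ, u ∈ Set.Icc (0 : Fin n → ℝ) 1 → ∀ c : ℝ,
      (u + fun _ => c) ∈ Set.Icc (0 : Fin n → ℝ) 1 →
      ψ (u + fun _ => c) = ψ u + c)

include hhom in
lemma val_scale {x : Fin n → ℝ} {l c : ℝ} (h : Adm x l c) {l' : ℝ}
    (h0 : 0 < l') (hle : l' ≤ l) : Adm x l' c ∧ val ψ x l' c = val ψ x l c := by
  obtain ⟨hl, hm⟩ := h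
  have hd0 : 0 < l' / l := div_pos h0 hl
  have hd1 : l' / l ≤ 1 := by rw [div_le_one hl]; exact hle
  have hsm : l' • (x + fun _ => c) = (l' / l) • (l • (x + fun _ => c)) := by
    rw [smul_smul]; congr 1; field_simp
  have hmem : l' • (x + fun _ => c) ∈ Set.Icc (0 : Fin n → ℝ) 1 := by
    rw [hsm]; exact smul_mem_cube hm hd0.le hd1
  refine ⟨⟨h0, hmem⟩, ?_⟩
  have hv : ψ (l' • (x + fun _ => c)) = (l' / l) * ψ (l • (x + fun _ => c)) := by
    rw [hsm]; exact hhom _ hm _ hd0 (hsm ▸ hmem)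
  simp only [val, hv]
  have hl0 : (l:ℝ) ≠ 0 := ne_of_gt hl
  have hl'0 : (l':ℝ) ≠ 0 := ne_of_gt h0
  field_simp

include hti in
lemma val_trans {x : Fin n → ℝ} {l c₁ c₂ : ℝ} (h1 : Adm x l c₁) (h2 : Adm x l c₂) :
    val ψ x l c₁ = val ψ x l c₂ := by
  obtain ⟨hl, hm1⟩ := h1
  obtain ⟨_, hm2⟩ := h2
  have key : l • (x + fun _ => c₂) =
      (l • (x + fun _ => c₁)) + fun _ => l * (c₂ - c₁) := by
    funext i
    show l * (x i + c₂) = l * (x i + c₁) + l * (c₂ - c₁)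
    ring
  have hv := hti _ hm1 (l * (c₂ - c₁)) (key ▸ hm2)
  have hl0 : (l:ℝ) ≠ 0 := ne_of_gt hl
  simp only [val]
  rw [key, hv]
  field_simp
  ring

include hhom hti in
lemma val_indep {x : Fin n → ℝ} {l₁ c₁ l₂ c₂ : ℝ} (h1 : Adm x l₁ c₁)
    (h2 : Adm x l₂ c₂) : val ψ x l₁ c₁ = val ψ x l₂ c₂ := by
  have h0 : 0 < min l₁ l₂ := lt_min h1.1 h2.1
  obtain ⟨a1, e1⟩ := val_scale hhom h1 h0 (min_le_left _ _)
  obtain ⟨a2, e2⟩ := val_scale hhom h2 h0 (min_le_right _ _)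
  rw [← e1, ← e2, val_trans hti a1 a2]

include hhom hti in
lemma Psi_eq_val {x : Fin n → ℝ} {l c : ℝ} (h : Adm x l c) :
    Psi ψ x = val ψ x l c :=
  val_indep hhom hti (adm_canon x) h

include hhom hti in
lemma Psi_eq {u : Fin n → ℝ} (hu : u ∈ Set.Icc (0 : Fin n → ℝ) 1) :
    Psi ψ u = ψ u := by
  have hadm : Adm u 1 0 := by
    refine ⟨one_pos, ?_⟩
    have : (1:ℝ) • (u + fun _ => (0:ℝ)) = u := by funext i; show 1 * (u i + 0) = u i; ring
    rw [this]; exact hu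
  rw [Psi_eq_val hhom hti hadm]
  have : (1:ℝ) • (u + fun _ => (0:ℝ)) = u := by funext i; show 1 * (u i + 0) = u i; ring
  simp [val, this]

include hhom hti in
lemma Psi_hom (x : Fin n → ℝ) {α : ℝ} (hα : 0 < α) :
    Psi ψ (α • x) = α * Psi ψ x := by
  obtain ⟨hl, hm⟩ := adm_canon x
  set l := (2 * cc x)⁻¹
  set c := cc x
  have harg : (l / α) • (α • x + fun _ => α * c) = l • (x + fun _ => c) := by
    funext i
    show l / α * (α * x i + α * c) = l * (x i + c)
    field_simp
  have hadm : Adm (α • x) (l / α) (α * c) := by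
    refine ⟨div_pos hl hα, ?_⟩
    have : (α • x + fun _ => α * c) = (fun i => α * x i + α * c) := by
      funext i; rfl
    rw [show ((l / α) • (α • x + fun _ => α * c) : Fin n → ℝ)
        = l • (x + fun _ => c) from harg]
    exact hm
  rw [Psi_eq_val hhom hti hadm, Psi_eq_val hhom hti (adm_canon x)]
  have hα0 : α ≠ 0 := ne_of_gt hα
  have hl0 : l ≠ 0 := ne_of_gt hl
  simp only [val, harg]
  generalize ψ (l • (x + fun _ => c)) = P
  have he : (l / α)⁻¹ = α * l⁻¹ := by rw [inv_div, div_eq_mul_inv]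
  rw [he]
  ring

include hhom hti in
lemma Psi_ti (x : Fin n → ℝ) (t : ℝ) :
    Psi ψ (x + fun _ => t) = Psi ψ x + t := by
  obtain ⟨hl, hm⟩ := adm_canon x
  set l := (2 * cc x)⁻¹
  set c := cc x
  have harg : ((x + fun _ => t) + fun _ => (c - t)) = x + fun _ => c := by
    funext i; show (x i + t) + (c - t) = x i + c; ring
  have hadm : Adm (x + fun _ => t) l (c - t) := by
    refine ⟨hl, ?_⟩; rw [harg]; exact hm
  rw [Psi_eq_val hhom hti hadm]
  simp only [Psi, val, harg]
  ring

section
variable (hmono : ∀ u v : Fin n → ℝ, u ∈ Set.Icc (0 : Fin n → ℝ) 1 →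
      v ∈ Set.Icc (0 : Fin n → ℝ) 1 → (∀ i, v i < u i) → ψ v < ψ u)

include hmono hhom hti in
lemma Psi_lt {x y : Fin n → ℝ} (h : ∀ i, x i < y i) : Psi ψ x < Psi ψ y := by
  obtain ⟨l, c, hx, hy⟩ := adm_pair x y
  rw [Psi_eq_val hhom hti hx, Psi_eq_val hhom hti hy]
  have hl : 0 < l := hx.1
  have hψ : ψ (l • (x + fun _ => c)) < ψ (l • (y + fun _ => c)) := by
    refine hmono _ _ hy.2 hx.2 fun i => ?_
    show l * (x i + c) < l * (y i + c)
    have := h i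
    nlinarith
  simp only [val]
  have : 0 < l⁻¹ := inv_pos.mpr hl
  nlinarith

include hmono hhom hti in
lemma Psi_mono {x y : Fin n → ℝ} (h : ∀ i, x i ≤ y i) : Psi ψ x ≤ Psi ψ y := by
  refine le_of_forall_pos_le_add fun ε hε => ?_
  have hlt : Psi ψ x < Psi ψ (y + fun _ => ε) := by
    refine Psi_lt hhom hti hmono fun i => ?_
    show x i < y i + ε
    have := h i; linarith
  rw [Psi_ti hhom hti] at hlt
  linarith

include hhom hti in
lemma Psi_zero : Psi ψ (0 : Fin n → ℝ) = 0 := by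
  have h2 : Psi ψ ((2:ℝ) • (0 : Fin n → ℝ)) = 2 * Psi ψ 0 :=
    Psi_hom hhom hti 0 two_pos
  rw [smul_zero] at h2
  linarith

include hmono hhom hti in
lemma Psi_cont : Continuous (Psi ψ) := by
  have hb : ∀ x y : Fin n → ℝ, Psi ψ x ≤ Psi ψ y + ∑ i, dist (x i) (y i) := by
    intro x y
    set D := ∑ i, dist (x i) (y i) with hD
    have hle : ∀ i, x i ≤ ((y + fun _ => D : Fin n → ℝ)) i := by
      intro i
      show x i ≤ y i + D
      have h1 : dist (x i) (y i) ≤ D :=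
        Finset.single_le_sum (fun j _ => dist_nonneg) (Finset.mem_univ i)
      have h2 : x i - y i ≤ dist (x i) (y i) := by
        rw [Real.dist_eq]; exact le_abs_self _
      linarith
    calc Psi ψ x ≤ Psi ψ (y + fun _ => D) :=
          Psi_mono hhom hti hmono hle
      _ = Psi ψ y + D := Psi_ti hhom hti _ _
  refine (LipschitzWith.of_dist_le_mul (K := n) fun x y => ?_).continuous
  have h1 := hb x y
  have h2 := hb y x
  have hsymm : ∀ i, dist (y i) (x i) = dist (x i) (y i) := fun i => dist_comm _ _
  simp only [hsymm] at h2
  have hsum : ∑ i, dist (x i) (y i) ≤ n * dist x y := by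
    calc ∑ i, dist (x i) (y i) ≤ ∑ _i : Fin n, dist x y :=
          Finset.sum_le_sum fun i _ => dist_le_pi_dist x y i
      _ = n * dist x y := by simp [Finset.sum_const, nsmul_eq_mul]
  rw [Real.dist_eq, abs_le]
  push_cast
  constructor <;> linarith

end

section
variable (hqc : ∀ u v : Fin n → ℝ, u ∈ Set.Icc (0 : Fin n → ℝ) 1 →
      v ∈ Set.Icc (0 : Fin n → ℝ) 1 → ∀ α : ℝ, α ∈ Set.Icc (0 : ℝ) 1 →
      min (ψ u) (ψ v) ≤ ψ (α • u + (1 - α) • v))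

include hqc hhom hti in
lemma Psi_qc (x y : Fin n → ℝ) {α : ℝ} (h0 : 0 ≤ α) (h1 : α ≤ 1) :
    min (Psi ψ x) (Psi ψ y) ≤ Psi ψ (α • x + (1 - α) • y) := by
  obtain ⟨l, c, hx, hy⟩ := adm_pair x y
  have hl : 0 < l := hx.1
  have hcomb : (l • ((α • x + (1 - α) • y) + fun _ => c) : Fin n → ℝ)
      = α • (l • (x + fun _ => c)) + (1 - α) • (l • (y + fun _ => c)) := by
    funext i
    show l * ((α * x i + (1 - α) * y i) + c)
      = α * (l * (x i + c)) + (1 - α) * (l * (y i + c))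
    ring
  have hadm : Adm (α • x + (1 - α) • y) l c := by
    refine ⟨hl, ?_⟩
    rw [hcomb]
    have hcv : Convex ℝ (Set.Icc (0 : Fin n → ℝ) 1) := convex_Icc _ _
    exact hcv hx.2 hy.2 h0 (by linarith) (by ring)
  rw [Psi_eq_val hhom hti hx, Psi_eq_val hhom hti hy, Psi_eq_val hhom hti hadm]
  have hmin := hqc _ _ hx.2 hy.2 α ⟨h0, h1⟩
  simp only [val, hcomb]
  have hl' : 0 < l⁻¹ := inv_pos.mpr hl
  rcases le_total (ψ (l • (x + fun _ => c))) (ψ (l • (y + fun _ => c))) with hc | hc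
  · rw [min_eq_left hc] at hmin
    rw [min_eq_left (by nlinarith)]
    nlinarith
  · rw [min_eq_right hc] at hmin
    rw [min_eq_right (by nlinarith)]
    nlinarith

include hqc hhom hti in
lemma Psi_concave_aux {x y : Fin n → ℝ} {α : ℝ} (h0 : 0 ≤ α) (h1 : α ≤ 1)
    (ha : 0 < Psi ψ x) (hab : Psi ψ x ≤ Psi ψ y) :
    α * Psi ψ x + (1 - α) * Psi ψ y ≤ Psi ψ (α • x + (1 - α) • y) := by
  set a := Psi ψ x with haa
  set b := Psi ψ y with hbb
  have hb : 0 < b := lt_of_lt_of_le ha hab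
  set m := α * a + (1 - α) * b with hm'
  have hm : 0 < m := by nlinarith
  have hy' : Psi ψ ((a / b) • y) = a := by
    rw [Psi_hom hhom hti y (div_pos ha hb), ← hbb]
    field_simp
  set β := α * a / m with hβ'
  have hβ0 : 0 ≤ β := by positivity
  have hβ1 : β ≤ 1 := by
    rw [hβ', div_le_one hm]
    nlinarith
  have hcomb : β • x + (1 - β) • ((a / b) • y) = (a / m) • (α • x + (1 - α) • y) := by
    funext i
    show β * x i + (1 - β) * (a / b * y i) = a / m * (α * x i + (1 - α) * y i)
    have e1 : β = a / m * α := by rw [hβ']; ring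
    have e2 : (1 - β) * (a / b) = a / m * (1 - α) := by
      rw [hβ']
      field_simp
      ring
    calc β * x i + (1 - β) * (a / b * y i)
        = β * x i + ((1 - β) * (a / b)) * y i := by ring
      _ = β * x i + (a / m * (1 - α)) * y i := by rw [e2]
      _ = (a / m * α) * x i + (a / m * (1 - α)) * y i := by rw [e1]
      _ = a / m * (α * x i + (1 - α) * y i) := by ring
  have hq := Psi_qc hhom hti hqc x ((a / b) • y) hβ0 hβ1
  rw [hy', hcomb, Psi_hom hhom hti _ (div_pos ha hm), ← haa, min_self] at hq
  -- hq : a ≤ a / m * Psi ψ (α • x + (1 - α) • y)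
  have hfin : m ≤ Psi ψ (α • x + (1 - α) • y) := by
    by_contra hcon
    push_neg at hcon
    have : a / m * Psi ψ (α • x + (1 - α) • y) < a / m * m :=
      mul_lt_mul_of_pos_left hcon (div_pos ha hm)
    rw [div_mul_cancel₀ _ (ne_of_gt hm)] at this
    linarith
  linarith

include hqc hhom hti in
lemma Psi_concave (x y : Fin n → ℝ) {α : ℝ} (h0 : 0 ≤ α) (h1 : α ≤ 1) :
    α * Psi ψ x + (1 - α) * Psi ψ y ≤ Psi ψ (α • x + (1 - α) • y) := by
  set t := 1 + |Psi ψ x| + |Psi ψ y| with ht'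
  have hx' : 0 < Psi ψ (x + fun _ => t) := by
    rw [Psi_ti hhom hti]
    have := neg_abs_le (Psi ψ x)
    have := abs_nonneg (Psi ψ y)
    rw [ht']; linarith
  have hy' : 0 < Psi ψ (y + fun _ => t) := by
    rw [Psi_ti hhom hti]
    have := neg_abs_le (Psi ψ y)
    have := abs_nonneg (Psi ψ x)
    rw [ht']; linarith
  have hsh : (α • (x + fun _ => t) + (1 - α) • (y + fun _ => t) : Fin n → ℝ)
      = (α • x + (1 - α) • y) + fun _ => t := by
    funext i
    show α * (x i + t) + (1 - α) * (y i + t) = (α * x i + (1 - α) * y i) + t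
    ring
  have hsh2 : (((1 - α) • (y + fun _ => t) + (1 - (1 - α)) • (x + fun _ => t)) : Fin n → ℝ)
      = (α • x + (1 - α) • y) + fun _ => t := by
    funext i
    show (1 - α) * (y i + t) + (1 - (1 - α)) * (x i + t) = (α * x i + (1 - α) * y i) + t
    ring
  rcases le_total (Psi ψ (x + fun _ => t)) (Psi ψ (y + fun _ => t)) with hcmp | hcmp
  · have := Psi_concave_aux hhom hti hqc h0 h1 hx' hcmp
    rw [hsh, Psi_ti hhom hti, Psi_ti hhom hti, Psi_ti hhom hti] at this
    nlinarith
  · have := Psi_concave_aux hhom hti hqc (x := y + fun _ => t)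
      (y := x + fun _ => t) (α := 1 - α) (by linarith) (by linarith) hy' hcmp
    rw [hsh2, Psi_ti hhom hti, Psi_ti hhom hti, Psi_ti hhom hti] at this
    nlinarith

variable (hmono : ∀ u v : Fin n → ℝ, u ∈ Set.Icc (0 : Fin n → ℝ) 1 →
      v ∈ Set.Icc (0 : Fin n → ℝ) 1 → (∀ i, v i < u i) → ψ v < ψ u)

include hqc hhom hti hmono in
lemma exists_mu (x₀ : Fin n → ℝ) :
    ∃ μ : Fin n → ℝ, (∀ i, 0 ≤ μ i) ∧ ∑ i, μ i = 1 ∧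
      (∀ x, Psi ψ x ≤ ∑ i, μ i * x i) ∧ ∑ i, μ i * x₀ i = Psi ψ x₀ := by
  classical
  set O : Set ((Fin n → ℝ) × ℝ) := {p | p.2 < Psi ψ p.1} with hO
  have hOopen : IsOpen O :=
    isOpen_lt continuous_snd ((Psi_cont hhom hti hmono).comp continuous_fst)
  have hOconv : Convex ℝ O := by
    rintro p hp q hq a b ha hb hab
    simp only [hO, Set.mem_setOf_eq] at hp hq ⊢
    have hb' : b = 1 - a := by linarith
    have hcc := Psi_concave hhom hti hqc p.1 q.1 ha (by linarith)
    have h1 : (a • p + b • q).1 = a • p.1 + b • q.1 := rfl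
    have h2 : (a • p + b • q).2 = a * p.2 + b * q.2 := rfl
    rw [h1, h2, hb']
    have hstr : a * p.2 + (1 - a) * q.2 < a * Psi ψ p.1 + (1 - a) * Psi ψ q.1 := by
      rcases eq_or_lt_of_le ha with heq | hpos
      · rw [← heq]; simpa using hq
      · have t1 : a * p.2 < a * Psi ψ p.1 := mul_lt_mul_of_pos_left hp hpos
        have t2 : (1 - a) * q.2 ≤ (1 - a) * Psi ψ q.1 :=
          mul_le_mul_of_nonneg_left hq.le (by linarith)
        linarith
    linarith
  have hp0 : ((x₀, Psi ψ x₀) : (Fin n → ℝ) × ℝ) ∉ O := by simp [hO]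
  obtain ⟨f, hf⟩ := geometric_hahn_banach_open_point hOconv hOopen hp0
  set r := f ((0 : Fin n → ℝ), (1:ℝ)) with hr'
  set φ : (Fin n → ℝ) →L[ℝ] ℝ := f.comp (ContinuousLinearMap.inl ℝ (Fin n → ℝ) ℝ)
    with hφ'
  set g : Fin n → ℝ := fun i => φ (fun j => if i = j then (1:ℝ) else 0) with hg'
  have hdec : ∀ (x : Fin n → ℝ) (y : ℝ), f (x, y) = (∑ i, x i * g i) + y * r := by
    intro x y
    have hsplit : ((x, y) : (Fin n → ℝ) × ℝ)
        = ((x, (0:ℝ)) : (Fin n → ℝ) × ℝ) + y • (((0 : Fin n → ℝ), (1:ℝ))) := by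
      simp [Prod.ext_iff]
    rw [hsplit, map_add, map_smul, smul_eq_mul, ← hr']
    have hx0 : f ((x, (0:ℝ)) : (Fin n → ℝ) × ℝ) = φ x := by
      simp [hφ']
    rw [hx0]
    congr 1
    conv_lhs => rw [pi_eq_sum_univ x]
    rw [map_sum]
    refine Finset.sum_congr rfl fun i _ => ?_
    rw [map_smul, smul_eq_mul]
  have hkey : ∀ (x : Fin n → ℝ) (t : ℝ), t < Psi ψ x →
      (∑ i, x i * g i) + t * r < (∑ i, x₀ i * g i) + Psi ψ x₀ * r := by
    intro x t ht
    have := hf (x, t) ht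
    rwa [hdec, hdec] at this
  have hr : 0 < r := by
    have := hkey x₀ (Psi ψ x₀ - 1) (by linarith)
    nlinarith
  set μ : Fin n → ℝ := fun i => -g i / r with hμ'
  have e1 : ∀ x : Fin n → ℝ, ∑ i, x i * g i = -(r * ∑ i, μ i * x i) := by
    intro x
    have : ∑ i, μ i * x i = (∑ i, -(x i * g i)) / r := by
      rw [Finset.sum_div]
      refine Finset.sum_congr rfl fun i _ => ?_
      show -g i / r * x i = -(x i * g i) / r
      ring
    rw [this]
    have hr0 : r ≠ 0 := ne_of_gt hr
    rw [Finset.sum_neg_distrib]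
    field_simp
  have hgrad : ∀ x : Fin n → ℝ,
      Psi ψ x - ∑ i, μ i * x i ≤ Psi ψ x₀ - ∑ i, μ i * x₀ i := by
    intro x
    refine le_of_forall_pos_le_add fun ε hε => ?_
    have hk := hkey x (Psi ψ x - ε) (by linarith)
    rw [e1 x, e1 x₀] at hk
    have h2 : (Psi ψ x - (∑ i, μ i * x i) - ε) * r
        < (Psi ψ x₀ - ∑ i, μ i * x₀ i) * r := by nlinarith
    have h3 := lt_of_mul_lt_mul_right h2 hr.le
    linarith
  have h2x : Psi ψ ((2:ℝ) • x₀) = 2 * Psi ψ x₀ := Psi_hom hhom hti x₀ two_pos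
  have hs2 : ∑ i, μ i * ((2:ℝ) • x₀) i = 2 * ∑ i, μ i * x₀ i := by
    rw [Finset.mul_sum]
    refine Finset.sum_congr rfl fun i _ => ?_
    show μ i * (2 * x₀ i) = 2 * (μ i * x₀ i)
    ring
  have g1 := hgrad ((2:ℝ) • x₀)
  rw [h2x, hs2] at g1
  have g0 := hgrad 0
  have hz : ∑ i, μ i * (0 : Fin n → ℝ) i = 0 := by simp
  rw [Psi_zero hhom hti, hz] at g0
  have heq : ∑ i, μ i * x₀ i = Psi ψ x₀ := by linarith
  have hdom : ∀ x, Psi ψ x ≤ ∑ i, μ i * x i := by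
    intro x
    have := hgrad x
    linarith
  have hnn : ∀ i, 0 ≤ μ i := by
    intro i
    set w : Fin n → ℝ := fun j => x₀ j + (if j = i then 1 else 0) with hw'
    have hws : ∑ j, μ j * w j = (∑ j, μ j * x₀ j) + μ i := by
      have : ∀ j, μ j * w j = μ j * x₀ j + (if j = i then μ j else 0) := by
        intro j
        rw [hw']
        by_cases h : j = i
        · simp only [h, if_true]; ring
        · simp [h]
      rw [Finset.sum_congr rfl fun j _ => this j, Finset.sum_add_distrib,
        Finset.sum_ite_eq' Finset.univ i μ]
      simp
    have hm := Psi_mono hhom hti hmono (x := x₀) (y := w)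
      (fun j => by rw [hw']; by_cases h : j = i <;> simp [h])
    have hd := hdom w
    rw [hws, heq] at hd
    linarith
  have hsum1 : ∑ i, μ i = 1 := by
    have hp1 : Psi ψ (x₀ + fun _ => (1:ℝ)) = Psi ψ x₀ + 1 := Psi_ti hhom hti _ _
    have hm1 : Psi ψ (x₀ + fun _ => (-1:ℝ)) = Psi ψ x₀ + (-1) := Psi_ti hhom hti _ _
    have hsum : ∀ c : ℝ, ∑ j, μ j * ((x₀ + fun _ => c : Fin n → ℝ)) j
        = (∑ j, μ j * x₀ j) + c * ∑ j, μ j := by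
      intro c
      rw [Finset.mul_sum, ← Finset.sum_add_distrib]
      refine Finset.sum_congr rfl fun j _ => ?_
      show μ j * (x₀ j + c) = μ j * x₀ j + c * μ j
      ring
    have d1 := hdom (x₀ + fun _ => (1:ℝ))
    rw [hp1, hsum 1, heq] at d1
    have d2 := hdom (x₀ + fun _ => (-1:ℝ))
    rw [hm1, hsum (-1), heq] at d2
    have : (1:ℝ) ≤ ∑ j, μ j := by linarith
    have : ∑ j, μ j ≤ 1 := by linarith
    linarith
  exact ⟨μ, hnn, hsum1, hdom, heq⟩

end

end
end S6

/-- Analytic core of the paper's Theorem 1 (Gilboa–Schmeidler-type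
representation): a monotonic, continuous, quasiconcave, homogeneous and
translation-invariant function on the unit cube is the minimum of weighted sums
over a nonempty closed convex set of weights in the probability simplex. -/
theorem stmt_6 {n : ℕ} (hn : 1 ≤ n) (ψ : (Fin n → ℝ) → ℝ)
    (hmono : ∀ u v : Fin n → ℝ, u ∈ Set.Icc (0 : Fin n → ℝ) 1 →
      v ∈ Set.Icc (0 : Fin n → ℝ) 1 → (∀ i, v i < u i) → ψ v < ψ u)
    (hcont : ContinuousOn ψ (Set.Icc (0 : Fin n → ℝ) 1))
    (hqc : ∀ u v : Fin n → ℝ, u ∈ Set.Icc (0 : Fin n → ℝ) 1 →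
      v ∈ Set.Icc (0 : Fin n → ℝ) 1 → ∀ α : ℝ, α ∈ Set.Icc (0 : ℝ) 1 →
      min (ψ u) (ψ v) ≤ ψ (α • u + (1 - α) • v))
    (hhom : ∀ u : Fin n → ℝ, u ∈ Set.Icc (0 : Fin n → ℝ) 1 → ∀ α : ℝ, 0 < α →
      α • u ∈ Set.Icc (0 : Fin n → ℝ) 1 → ψ (α • u) = α * ψ u)
    (hti : ∀ u : Fin n → ℝ, u ∈ Set.Icc (0 : Fin n → ℝ) 1 → ∀ c : ℝ,
      (u + fun _ => c) ∈ Set.Icc (0 : Fin n → ℝ) 1 →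
      ψ (u + fun _ => c) = ψ u + c) :
    ∃ M : Set (Fin n → ℝ), M.Nonempty ∧ IsClosed M ∧ Convex ℝ M ∧
      M ⊆ {μ : Fin n → ℝ | (∀ i, 0 ≤ μ i) ∧ ∑ i, μ i = 1} ∧
      ∀ u ∈ Set.Icc (0 : Fin n → ℝ) 1,
        IsLeast ((fun μ : Fin n → ℝ => ∑ i, μ i * u i) '' M) (ψ u) := by
  classical
  have hPeq : ∀ u ∈ Set.Icc (0 : Fin n → ℝ) 1, S6.Psi ψ u = ψ u :=
    fun u hu => S6.Psi_eq hhom hti hu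
  have hex := S6.exists_mu (ψ := ψ) hhom hti hqc hmono
  refine ⟨({μ : Fin n → ℝ | ∀ i, 0 ≤ μ i} ∩ {μ : Fin n → ℝ | ∑ i, μ i = 1}) ∩
      ⋂ u ∈ Set.Icc (0 : Fin n → ℝ) 1, {μ : Fin n → ℝ | ψ u ≤ ∑ i, μ i * u i},
    ?_, ?_, ?_, ?_, ?_⟩
  · obtain ⟨μ, h1, h2, h3, _⟩ := hex 0
    refine ⟨μ, ⟨⟨h1, h2⟩, Set.mem_iInter₂.mpr fun v hv => ?_⟩⟩
    show ψ v ≤ ∑ i, μ i * v i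
    rw [← hPeq v hv]
    exact h3 v
  · refine IsClosed.inter (IsClosed.inter ?_ ?_) ?_
    · have he : {μ : Fin n → ℝ | ∀ i, 0 ≤ μ i} = ⋂ i, {μ : Fin n → ℝ | 0 ≤ μ i} := by
        ext μ; simp
      rw [he]
      exact isClosed_iInter fun i => isClosed_le continuous_const (continuous_apply i)
    · exact isClosed_eq (continuous_finset_sum _ fun i _ => continuous_apply i)
        continuous_const
    · exact isClosed_biInter fun u hu => isClosed_le continuous_const
        (continuous_finset_sum _ fun i _ => (continuous_apply i).mul continuous_const)
  · refine Convex.inter (Convex.inter ?_ ?_) ?_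
    · intro μ hμ ν hν a b ha hb hab i
      exact add_nonneg (mul_nonneg ha (hμ i)) (mul_nonneg hb (hν i))
    · intro μ hμ ν hν a b ha hb hab
      show ∑ i, (a • μ + b • ν : Fin n → ℝ) i = 1
      have he : ∀ i, (a • μ + b • ν : Fin n → ℝ) i = a * μ i + b * ν i := fun i => rfl
      calc ∑ i, (a • μ + b • ν : Fin n → ℝ) i
          = ∑ i, (a * μ i + b * ν i) := Finset.sum_congr rfl fun i _ => he i
        _ = a * ∑ i, μ i + b * ∑ i, ν i := by
            rw [Finset.sum_add_distrib, Finset.mul_sum, Finset.mul_sum]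
        _ = 1 := by rw [hμ, hν]; linarith
    · refine convex_iInter₂ fun u hu => ?_
      intro μ hμ ν hν a b ha hb hab
      show ψ u ≤ ∑ i, (a • μ + b • ν : Fin n → ℝ) i * u i
      have hμ' : ψ u ≤ ∑ i, μ i * u i := hμ
      have hν' : ψ u ≤ ∑ i, ν i * u i := hν
      have hssum : ∑ i, (a • μ + b • ν : Fin n → ℝ) i * u i
          = a * ∑ i, μ i * u i + b * ∑ i, ν i * u i := by
        rw [Finset.mul_sum, Finset.mul_sum, ← Finset.sum_add_distrib]
        refine Finset.sum_congr rfl fun i _ => ?_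
        show (a * μ i + b * ν i) * u i = a * (μ i * u i) + b * (ν i * u i)
        ring
      rw [hssum]
      have hsplit : ψ u = a * ψ u + b * ψ u := by rw [← add_mul, hab, one_mul]
      rw [hsplit]
      exact add_le_add (mul_le_mul_of_nonneg_left hμ' ha)
        (mul_le_mul_of_nonneg_left hν' hb)
  · rintro μ ⟨⟨h1, h2⟩, _⟩
    exact ⟨h1, h2⟩
  · intro u hu
    constructor
    · obtain ⟨μ, h1, h2, h3, h4⟩ := hex u
      refine ⟨μ, ⟨⟨h1, h2⟩, Set.mem_iInter₂.mpr fun v hv => ?_⟩, ?_⟩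
      · show ψ v ≤ ∑ i, μ i * v i
        rw [← hPeq v hv]
        exact h3 v
      · show ∑ i, μ i * u i = ψ u
        rw [h4, hPeq u hu]
    · rintro y ⟨μ, hμ, rfl⟩
      exact Set.mem_iInter₂.mp hμ.2 u hu
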